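/- Let A = ℤ^m and SAT(A,1) the set of satisfiable one-variable equations over A. Then |ρ_r(SAT(A,1)) − Z_r(m)/r| = O(Z_r(m−1)/r²), where Z_n(m) = Σ_{γ=1}^n 1/γ^m. -/

import Mathlib

/-- A one-variable equation `x^γ a^α = 1` over `ℤ^m` is satisfiable iff
`γ ≠ 0` and `γ ∣ gcd(α)`, or `γ = 0` and `α = 0`. -/
def SatOne (m : ℕ) (e : ℤ × (Fin m → ℤ)) : Prop :=
  (e.1 ≠ 0 ∧ e.1 ∣ Finset.univ.gcd e.2) ∨ (e.1 = 0 ∧ ∀ j, e.2 j = 0)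

lemma satOne_iff (m : ℕ) (e : ℤ × (Fin m → ℤ)) : SatOne m e ↔ ∀ i, e.1 ∣ e.2 i := by
  unfold SatOne
  rcases eq_or_ne e.1 0 with h | h
  · simp [h, eq_comm, zero_dvd_iff]
  · simp only [h, ne_eq, not_false_iff, true_and, false_and, or_false]
    constructor
    · intro hd i
      exact hd.trans (Finset.gcd_dvd (Finset.mem_univ i))
    · intro h'
      exact Finset.dvd_gcd fun i _ => h' i


lemma mult_count (r γ : ℕ) (hγ : 1 ≤ γ) :
    ((Finset.Icc (-(r:ℤ)) r).filter (fun x => (γ:ℤ) ∣ x)).card = 2 * (r / γ) + 1 := by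
  have hγ' : (0:ℤ) < γ := by exact_mod_cast hγ
  set q : ℤ := (r:ℤ) / γ with hq
  have key : ∀ y : ℤ, (y ∈ Finset.Icc (-q) q) ↔ ((γ:ℤ) * y ∈ (Finset.Icc (-(r:ℤ)) r).filter (fun x => (γ:ℤ) ∣ x)) := by
    intro y
    simp only [Finset.mem_Icc, Finset.mem_filter]
    constructor
    · rintro ⟨h1, h2⟩
      have hy2 : (γ:ℤ) * y ≤ r := by
        have := (Int.le_ediv_iff_mul_le hγ').mp h2
        linarith [this]
      have hy1 : -(r:ℤ) ≤ γ * y := by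
        have h2' : -y ≤ q := by linarith
        have := (Int.le_ediv_iff_mul_le hγ').mp h2'
        linarith
      exact ⟨⟨hy1, hy2⟩, Dvd.intro _ rfl⟩
    · rintro ⟨⟨h1, h2⟩, -⟩
      constructor
      · have : -y ≤ q := (Int.le_ediv_iff_mul_le hγ').mpr (by linarith)
        linarith
      · exact (Int.le_ediv_iff_mul_le hγ').mpr (by linarith)
  have himg : (Finset.Icc (-q) q).image (fun y => (γ:ℤ) * y) =
      (Finset.Icc (-(r:ℤ)) r).filter (fun x => (γ:ℤ) ∣ x) := by
    ext x
    simp only [Finset.mem_image]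
    constructor
    · rintro ⟨y, hy, rfl⟩; exact (key y).mp hy
    · intro hx
      obtain ⟨-, c, hc⟩ := Finset.mem_filter.mp hx
      exact ⟨c, (key c).mpr (hc ▸ hx), hc.symm⟩
  have hinj : Set.InjOn (fun y => (γ:ℤ) * y) (Finset.Icc (-q) q) := by
    intro a _ b _ h
    exact mul_left_cancel₀ (by positivity) h
  have hq0 : 0 ≤ q := Int.ediv_nonneg (by positivity) hγ'.le
  calc ((Finset.Icc (-(r:ℤ)) r).filter (fun x => (γ:ℤ) ∣ x)).card
      = (Finset.Icc (-q) q).card := by rw [← himg, Finset.card_image_of_injOn hinj]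
    _ = (q + 1 - (-q)).toNat := Int.card_Icc _ _
    _ = 2 * (r / γ) + 1 := by
        have : ((r/γ:ℕ):ℤ) = q := rfl
        omega

section
variable (m r : ℕ)

noncomputable def Afin (γ : ℤ) : Finset (Fin m → ℤ) :=
  Fintype.piFinset fun _ => (Finset.Icc (-(r:ℤ)) r).filter (fun x => γ ∣ x)

noncomputable def Ffin : Finset (ℤ × (Fin m → ℤ)) :=
  (Finset.Icc (-(r:ℤ)) r).biUnion (fun γ => {γ} ×ˢ Afin m r γ)

lemma mem_Ffin (e : ℤ × (Fin m → ℤ)) :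
    e ∈ Ffin m r ↔ (|e.1| ≤ (r:ℤ) ∧ ∀ i, |e.2 i| ≤ (r:ℤ)) ∧ SatOne m e := by
  simp only [Ffin, Finset.mem_biUnion, Finset.mem_product, Finset.mem_singleton, Afin,
    Fintype.mem_piFinset, Finset.mem_filter, Finset.mem_Icc, satOne_iff, abs_le]
  constructor
  · rintro ⟨γ, hγ, rfl, h2⟩
    exact ⟨⟨hγ, fun i => (h2 i).1⟩, fun i => (h2 i).2⟩
  · rintro ⟨⟨h1, h2⟩, h3⟩
    exact ⟨e.1, h1, rfl, fun i => ⟨h2 i, h3 i⟩⟩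

lemma card_Ffin :
    (Ffin m r).card = ∑ γ ∈ Finset.Icc (-(r:ℤ)) r,
      (((Finset.Icc (-(r:ℤ)) r).filter (fun x => γ ∣ x)).card) ^ m := by
  rw [Ffin, Finset.card_biUnion]
  · refine Finset.sum_congr rfl fun γ _ => ?_
    rw [Finset.card_product, Finset.card_singleton, one_mul, Afin, Fintype.card_piFinset]
    simp [Finset.prod_const]
  · intro a _ b _ hab
    simp only [Finset.disjoint_left, Finset.mem_product, Finset.mem_singleton]
    rintro e ⟨rfl, -⟩ ⟨rfl, -⟩
    exact hab rfl

end

section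
variable (m r : ℕ)

lemma count_formula :
    (Ffin m r).card = 1 + 2 * ∑ γ ∈ Finset.Icc 1 r, (2 * (r / γ) + 1) ^ m := by
  classical
  set f : ℤ → ℕ := fun γ => (((Finset.Icc (-(r:ℤ)) r).filter (fun x => γ ∣ x)).card) ^ m with hf
  have hsplit : Finset.Icc (-(r:ℤ)) r = insert 0 (Finset.Icc (-(r:ℤ)) (-1) ∪ Finset.Icc 1 r) := by
    ext x; simp only [Finset.mem_Icc, Finset.mem_insert, Finset.mem_union]; omega
  have h0 : f 0 = 1 := by
    have : (Finset.Icc (-(r:ℤ)) r).filter (fun x => (0:ℤ) ∣ x) = {0} := by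
      ext x; simp only [Finset.mem_filter, Finset.mem_Icc, zero_dvd_iff, Finset.mem_singleton]
      constructor
      · rintro ⟨-, rfl⟩; rfl
      · rintro rfl; exact ⟨⟨by simp, by simp⟩, rfl⟩
    rw [show f 0 = ((Finset.Icc (-(r:ℤ)) r).filter (fun x => (0:ℤ) ∣ x)).card ^ m from rfl,
      this, Finset.card_singleton, one_pow]
  have hneg : ∀ γ : ℤ, f (-γ) = f γ := by
    intro γ; simp only [hf, neg_dvd]
  have hmap : Finset.Icc (1:ℤ) (r:ℤ) = (Finset.Icc 1 r).map ⟨Nat.cast, Nat.cast_injective⟩ := by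
    ext x
    simp only [Finset.mem_Icc, Finset.mem_map, Function.Embedding.coeFn_mk]
    constructor
    · intro ⟨h1, h2⟩
      exact ⟨x.toNat, by omega, by omega⟩
    · rintro ⟨y, hy, rfl⟩
      omega
  have hposval : ∀ γ ∈ Finset.Icc 1 r, f ((γ:ℕ):ℤ) = (2 * (r / γ) + 1) ^ m := by
    intro γ hγ
    show (((Finset.Icc (-(r:ℤ)) r).filter (fun x => ((γ:ℕ):ℤ) ∣ x)).card) ^ m = _
    rw [mult_count r γ (Finset.mem_Icc.mp hγ).1]
  have himg : Finset.Icc (-(r:ℤ)) (-1) = (Finset.Icc (1:ℤ) r).image Neg.neg := by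
    ext x
    simp only [Finset.mem_Icc, Finset.mem_image]
    constructor
    · intro ⟨h1, h2⟩; exact ⟨-x, by omega, by omega⟩
    · rintro ⟨y, hy, rfl⟩; omega
  have hsum1 : ∑ γ ∈ Finset.Icc (-(r:ℤ)) (-1), f γ = ∑ γ ∈ Finset.Icc (1:ℤ) r, f γ := by
    rw [himg, Finset.sum_image (by intro a _ b _ h; exact neg_injective h)]
    exact Finset.sum_congr rfl fun γ _ => hneg γ
  have hsum2 : ∑ γ ∈ Finset.Icc (1:ℤ) (r:ℤ), f γ = ∑ γ ∈ Finset.Icc 1 r, (2 * (r / γ) + 1) ^ m := by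
    rw [hmap, Finset.sum_map]
    exact Finset.sum_congr rfl hposval
  have hdisj : Disjoint (Finset.Icc (-(r:ℤ)) (-1)) (Finset.Icc (1:ℤ) r) := by
    simp only [Finset.disjoint_left, Finset.mem_Icc]
    intro a h1 h2; omega
  have h0mem : (0:ℤ) ∉ Finset.Icc (-(r:ℤ)) (-1) ∪ Finset.Icc (1:ℤ) r := by
    simp only [Finset.mem_union, Finset.mem_Icc]; omega
  have hF : (Ffin m r).card = ∑ γ ∈ Finset.Icc (-(r:ℤ)) r, f γ := card_Ffin m r
  rw [hF, hsplit, Finset.sum_insert h0mem, Finset.sum_union hdisj, h0, hsum1, hsum2]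
  ring

end

lemma natcard_eq (m r : ℕ) :
    Nat.card {e : ℤ × (Fin m → ℤ) //
        (|e.1| ≤ (r : ℤ) ∧ ∀ i, |e.2 i| ≤ (r : ℤ)) ∧ SatOne m e} =
      1 + 2 * ∑ γ ∈ Finset.Icc 1 r, (2 * (r / γ) + 1) ^ m := by
  rw [← count_formula m r]
  rw [Nat.card_congr (Equiv.subtypeEquivRight (fun e => (mem_Ffin m r e).symm))]
  exact Nat.card_eq_finsetCard _

lemma pow_diff_bound : ∀ (n : ℕ) (a b M : ℝ), 0 ≤ a → a ≤ M → 0 ≤ b → b ≤ M →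
    |a ^ n - b ^ n| ≤ n * M ^ (n - 1) * |a - b| := by
  intro n
  induction n with
  | zero => intro a b M _ _ _ _; simp
  | succ k ih =>
    intro a b M ha haM hb hbM
    have hM : 0 ≤ M := le_trans ha haM
    have key : a ^ (k+1) - b ^ (k+1) = a * (a ^ k - b ^ k) + b ^ k * (a - b) := by ring
    have h1 : |a ^ (k+1) - b ^ (k+1)| ≤ a * |a ^ k - b ^ k| + b ^ k * |a - b| := by
      rw [key]
      refine (abs_add_le _ _).trans ?_
      rw [abs_mul, abs_mul, abs_of_nonneg ha, abs_of_nonneg (pow_nonneg hb k)]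
    have h2 : a * |a ^ k - b ^ k| ≤ M * (k * M ^ (k - 1) * |a - b|) := by
      exact mul_le_mul haM (ih a b M ha haM hb hbM) (abs_nonneg _) hM
    have h3 : b ^ k * |a - b| ≤ M ^ k * |a - b| := by
      exact mul_le_mul_of_nonneg_right (pow_le_pow_left₀ hb hbM k) (abs_nonneg _)
    have h4 : M * (k * M ^ (k - 1) * |a - b|) ≤ k * M ^ k * |a - b| := by
      rcases Nat.eq_zero_or_pos k with rfl | hk
      · simp
      · have : M * M ^ (k - 1) = M ^ k := by
          rw [← pow_succ']
          congr 1
          omega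
        calc M * (k * M ^ (k - 1) * |a - b|) = k * (M * M ^ (k-1)) * |a - b| := by ring
          _ ≤ k * M ^ k * |a - b| := le_of_eq (by rw [this])
    calc |a ^ (k+1) - b ^ (k+1)| ≤ M * (k * M ^ (k - 1) * |a - b|) + M ^ k * |a - b| :=
          h1.trans (add_le_add h2 h3)
      _ ≤ k * M ^ k * |a - b| + M ^ k * |a - b| := by linarith
      _ ≤ ((k+1:ℕ):ℝ) * M ^ ((k+1) - 1) * |a - b| := le_of_eq (by push_cast; ring)


lemma term_bound (p r γ : ℕ) (h1 : 1 ≤ γ) (h2 : γ ≤ r) :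
    |((2 * (r / γ) + 1 : ℕ) : ℝ) ^ (p + 1) - (2 * r / γ : ℝ) ^ (p + 1)| ≤
      (p + 1) * 3 ^ p * (r : ℝ) ^ p * (1 / (γ : ℝ) ^ p) := by
  have hγ : (0:ℝ) < γ := by exact_mod_cast h1
  have hrγ : (1:ℝ) ≤ (r:ℝ) / γ := by
    rw [le_div_iff₀ hγ]; exact_mod_cast by omega
  set a : ℝ := ((2 * (r / γ) + 1 : ℕ) : ℝ) with ha
  set b : ℝ := 2 * r / γ with hb
  have hfl : ((r / γ : ℕ) : ℝ) ≤ (r:ℝ) / γ := Nat.cast_div_le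
  have hfu : (r:ℝ) / γ ≤ ((r / γ : ℕ) : ℝ) + 1 := by
    have := (Nat.div_lt_iff_lt_mul (by omega : 0 < γ)).mp (Nat.lt_succ_self (r / γ))
    have h' : (r:ℝ) < ((r / γ : ℕ) + 1 : ℝ) * γ := by exact_mod_cast this
    rw [div_le_iff₀ hγ]; linarith
  have hab : |a - b| ≤ 1 := by
    rw [abs_le]
    have ha' : a = 2 * ((r / γ : ℕ) : ℝ) + 1 := by push_cast [ha]; ring
    have hb' : b = 2 * ((r:ℝ) / γ) := by rw [hb]; ring
    constructor <;> [nlinarith; nlinarith]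
  have hM : (0:ℝ) < 3 * ((r:ℝ) / γ) := by linarith
  have haM : a ≤ 3 * ((r:ℝ) / γ) := by
    have ha' : a = 2 * ((r / γ : ℕ) : ℝ) + 1 := by push_cast [ha]; ring
    nlinarith
  have hbM : b ≤ 3 * ((r:ℝ) / γ) := by
    have hb' : b = 2 * ((r:ℝ) / γ) := by rw [hb]; ring
    linarith
  have ha0 : 0 ≤ a := by positivity
  have hb0 : 0 ≤ b := by positivity
  have := pow_diff_bound (p + 1) a b (3 * ((r:ℝ)/γ)) ha0 haM hb0 hbM
  simp only [Nat.add_sub_cancel] at this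
  push_cast at this
  calc |a ^ (p+1) - b ^ (p+1)| ≤ (p+1) * (3 * ((r:ℝ)/γ)) ^ p * |a - b| := this
    _ ≤ (p+1) * (3 * ((r:ℝ)/γ)) ^ p * 1 := by
        apply mul_le_mul_of_nonneg_left hab; positivity
    _ = (p + 1) * 3 ^ p * (r : ℝ) ^ p * (1 / (γ : ℝ) ^ p) := by
        rw [mul_one, mul_pow, div_pow]
        field_simp

open Filter

/-- Ball density at radius `r` of a set of one-variable equations over `ℤ^m`. -/
noncomputable def rhoOne (m : ℕ) (S : Set (ℤ × (Fin m → ℤ))) (r : ℕ) : ℝ :=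
  (Nat.card {e : ℤ × (Fin m → ℤ) //
      (|e.1| ≤ (r : ℤ) ∧ ∀ i, |e.2 i| ≤ (r : ℤ)) ∧ e ∈ S} : ℝ) /
    (2 * r + 1) ^ (m + 1)

/-- Partial zeta sum `Z_n(m) = Σ_{γ=1}^n γ^{-m}`. -/
noncomputable def Zsum (n m : ℕ) : ℝ := ∑ γ ∈ Finset.Icc 1 n, 1 / (γ : ℝ) ^ m

/-- `|ρ_r(SAT(ℤ^m,1)) − Z_r(m)/r| = O(Z_r(m−1)/r²)`. -/
theorem stmt9 (m : ℕ) (hm : 1 ≤ m) :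
    (fun r : ℕ => rhoOne m (SatOne m) r - Zsum r m / r) =O[atTop]
      (fun r : ℕ => Zsum r (m - 1) / (r : ℝ) ^ 2) := by
  obtain ⟨p, rfl⟩ : ∃ p, m = p + 1 := ⟨m - 1, by omega⟩
  simp only [Nat.add_sub_cancel]
  rw [Asymptotics.isBigO_iff]
  refine ⟨1 + (2 * (p+1) * 3 ^ p + (p+2) * 3 ^ (p+1)), ?_⟩
  filter_upwards [eventually_ge_atTop 1] with r hr
  set C : ℝ := 1 + (2 * (p+1) * 3 ^ p + (p+2) * 3 ^ (p+1)) with hC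
  set R : ℝ := (r : ℝ) with hRdef
  have hR : (1:ℝ) ≤ R := by rw [hRdef]; exact_mod_cast hr
  have hR0 : (0:ℝ) < R := by linarith
  set Z : ℝ := Zsum r (p+1) with hZdef
  set Z' : ℝ := Zsum r p with hZ'def
  have hZ0 : 0 ≤ Z := by
    rw [hZdef, Zsum]; positivity
  have hZ'1 : 1 ≤ Z' := by
    rw [hZ'def, Zsum]
    have h1 : (1:ℕ) ∈ Finset.Icc 1 r := by simp [Finset.mem_Icc]; omega
    have := Finset.single_le_sum (f := fun γ : ℕ => 1 / (γ:ℝ) ^ p)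
      (fun i _ => by positivity) h1
    simpa using this
  have hZZ' : Z ≤ Z' := by
    rw [hZdef, hZ'def, Zsum, Zsum]
    refine Finset.sum_le_sum fun γ hγ => ?_
    have h1 : (1:ℝ) ≤ (γ:ℝ) := by
      have := (Finset.mem_Icc.mp hγ).1; exact_mod_cast this
    apply div_le_div_of_nonneg_left zero_le_one (by positivity)
    exact pow_le_pow_right₀ h1 (by omega)
  set D : ℝ := (2 * R + 1) ^ (p + 2) with hDdef
  have hD0 : 0 < D := by positivity
  have hD4 : 4 * R ^ (p + 2) ≤ D := by
    rw [hDdef]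
    calc 4 * R ^ (p+2) ≤ 2 ^ (p+2) * R ^ (p+2) := by
          apply mul_le_mul_of_nonneg_right _ (by positivity)
          calc (4:ℝ) = 2 ^ 2 := by norm_num
            _ ≤ 2 ^ (p+2) := pow_le_pow_right₀ (by norm_num) (by omega)
      _ = (2 * R) ^ (p+2) := by rw [mul_pow]
      _ ≤ (2 * R + 1) ^ (p+2) := by
          apply pow_le_pow_left₀ (by positivity) (by linarith)
  set S : ℝ := ∑ γ ∈ Finset.Icc 1 r, ((2 * (r / γ) + 1 : ℕ) : ℝ) ^ (p+1) with hSdef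
  set T : ℝ := ∑ γ ∈ Finset.Icc 1 r, (2 * R / (γ:ℝ)) ^ (p+1) with hTdef
  have hN : rhoOne (p+1) (SatOne (p+1)) r = (1 + 2 * S) / D := by
    simp only [rhoOne]
    change (Nat.card {e : ℤ × (Fin (p+1) → ℤ) // (|e.1| ≤ (r : ℤ) ∧ ∀ i, |e.2 i| ≤ (r : ℤ)) ∧ SatOne (p+1) e} : ℝ) / _ = _
    rw [natcard_eq (p+1) r, hSdef, hDdef]
    push_cast
    ring
  have hST : |S - T| ≤ (p+1) * 3 ^ p * R ^ p * Z' := by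
    rw [hSdef, hTdef, ← Finset.sum_sub_distrib]
    refine (Finset.abs_sum_le_sum_abs _ _).trans ?_
    have : ∀ γ ∈ Finset.Icc 1 r,
        |((2 * (r / γ) + 1 : ℕ) : ℝ) ^ (p+1) - (2 * R / (γ:ℝ)) ^ (p+1)| ≤
          ((p:ℝ)+1) * 3 ^ p * R ^ p * (1 / (γ:ℝ) ^ p) := by
      intro γ hγ
      obtain ⟨h1, h2⟩ := Finset.mem_Icc.mp hγ
      exact term_bound p r γ h1 h2
    refine (Finset.sum_le_sum this).trans ?_
    rw [← Finset.mul_sum, hZ'def, Zsum]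
  have hT2 : 2 * T = 2 ^ (p+2) * R ^ (p+1) * Z := by
    rw [hTdef, hZdef, Zsum, Finset.mul_sum, Finset.mul_sum]
    refine Finset.sum_congr rfl fun γ hγ => ?_
    have h1 : (0:ℝ) < (γ:ℝ) := by
      have := (Finset.mem_Icc.mp hγ).1; exact_mod_cast by omega
    rw [div_pow, mul_pow]
    field_simp
    ring
  have hpow2 : |(2*R) ^ (p+2) - (2*R+1) ^ (p+2)| ≤ ((p:ℝ)+2) * 3 ^ (p+1) * R ^ (p+1) := by
    have h := pow_diff_bound (p+2) (2*R) (2*R+1) (2*R+1) (by linarith) (by linarith)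
      (by linarith) le_rfl
    simp only [show p + 2 - 1 = p + 1 by omega] at h
    have habs : |2*R - (2*R+1)| = 1 := by rw [show 2*R - (2*R+1) = -1 by ring]; simp
    rw [habs, mul_one] at h
    refine h.trans ?_
    push_cast
    have h31 : (2*R+1) ^ (p+1) ≤ (3*R) ^ (p+1) := by
      apply pow_le_pow_left₀ (by linarith) (by linarith)
    calc ((p:ℝ)+2) * (2*R+1) ^ (p+1) ≤ ((p:ℝ)+2) * (3*R) ^ (p+1) := by
          apply mul_le_mul_of_nonneg_left h31 (by positivity)
      _ = ((p:ℝ)+2) * 3 ^ (p+1) * R ^ (p+1) := by rw [mul_pow]; ring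
  have hmid : |2 * T - D * (Z / R)| ≤ ((p:ℝ)+2) * 3 ^ (p+1) * R ^ p * Z' := by
    have key : 2 * T - D * (Z / R) = (Z / R) * ((2*R) ^ (p+2) - (2*R+1) ^ (p+2)) := by
      rw [hT2, hDdef]
      have : (2*R) ^ (p+2) = 2 ^ (p+2) * R ^ (p+1) * R := by
        ring
      rw [this]
      field_simp
    rw [key, abs_mul]
    have hZR : |Z / R| = Z / R := abs_of_nonneg (by positivity)
    rw [hZR]
    calc Z / R * |(2*R) ^ (p+2) - (2*R+1) ^ (p+2)|
        ≤ (Z' / R) * (((p:ℝ)+2) * 3 ^ (p+1) * R ^ (p+1)) := by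
          apply mul_le_mul (by gcongr) hpow2 (abs_nonneg _) (by positivity)
      _ = ((p:ℝ)+2) * 3 ^ (p+1) * R ^ p * Z' := by
          rw [pow_succ]
          field_simp
          ring
  have hnum : |(1 + 2 * S) - D * (Z / R)| ≤ C * R ^ p * Z' := by
    have split : (1 + 2 * S) - D * (Z / R) = 1 + 2 * (S - T) + (2 * T - D * (Z / R)) := by
      ring
    rw [split]
    have tri : |1 + 2 * (S - T) + (2 * T - D * (Z / R))| ≤
        1 + 2 * |S - T| + |2 * T - D * (Z / R)| := by
      refine (abs_add_le _ _).trans ?_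
      have : |1 + 2 * (S - T)| ≤ 1 + 2 * |S - T| := by
        refine (abs_add_le _ _).trans ?_
        rw [abs_one, abs_mul]
        norm_num
      linarith
    refine tri.trans ?_
    have h1RZ : 1 ≤ R ^ p * Z' := by
      have : (1:ℝ) ≤ R ^ p := one_le_pow₀ hR
      nlinarith
    have e1 : (1:ℝ) ≤ 1 * (R ^ p * Z') := by rwa [one_mul]
    have e2 : 2 * |S - T| ≤ 2 * ((p:ℝ)+1) * 3 ^ p * (R ^ p * Z') := by
      calc 2 * |S - T| ≤ 2 * (((p:ℝ)+1) * 3 ^ p * R ^ p * Z') := by linarith [hST]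
        _ = 2 * ((p:ℝ)+1) * 3 ^ p * (R ^ p * Z') := by ring
    have e3 : |2 * T - D * (Z / R)| ≤ ((p:ℝ)+2) * 3 ^ (p+1) * (R ^ p * Z') := by
      calc |2 * T - D * (Z / R)| ≤ ((p:ℝ)+2) * 3 ^ (p+1) * R ^ p * Z' := hmid
        _ = ((p:ℝ)+2) * 3 ^ (p+1) * (R ^ p * Z') := by ring
    calc 1 + 2 * |S - T| + |2 * T - D * (Z / R)|
        ≤ 1 * (R ^ p * Z') + 2 * ((p:ℝ)+1) * 3 ^ p * (R ^ p * Z')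
          + ((p:ℝ)+2) * 3 ^ (p+1) * (R ^ p * Z') := by linarith
      _ = (1 + (2 * ((p:ℝ)+1) * 3 ^ p + ((p:ℝ)+2) * 3 ^ (p+1))) * (R ^ p * Z') := by ring
      _ = C * R ^ p * Z' := by rw [hC]; push_cast; ring
  -- final assembly
  have hCpos : (0:ℝ) < C := by rw [hC]; positivity
  have hfrac : rhoOne (p+1) (SatOne (p+1)) r - Z / R = ((1 + 2 * S) - D * (Z / R)) / D := by
    rw [hN, sub_div, mul_div_cancel_left₀ _ hD0.ne']
  have hRHS : (0:ℝ) ≤ Z' / R ^ 2 := by positivity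
  rw [Real.norm_eq_abs, Real.norm_eq_abs, abs_of_nonneg hRHS]
  rw [hfrac, abs_div, abs_of_pos hD0]
  calc |(1 + 2 * S) - D * (Z / R)| / D ≤ (C * R ^ p * Z') / (4 * R ^ (p+2)) := by
        apply div_le_div₀ (by positivity) hnum (by positivity) hD4
    _ = (C / 4) * (Z' / R ^ 2) := by
        rw [pow_add]
        have h1 : R ^ p ≠ 0 := by positivity
        have h2 : R ^ 2 ≠ 0 := by positivity
        field_simp
    _ ≤ C * (Z' / R ^ 2) := by
        have hRHS' : (0:ℝ) ≤ Z' / R ^ 2 := by positivity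
        apply mul_le_mul_of_nonneg_right _ hRHS'
        linarith
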